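/- For the REK method, the squared-error decomposition E[||x_k - x_⋆||^2] = E[||x_k - x̂_k||^2] + E[||x̂_k - x_⋆||^2] holds, where x̂_k = x_{k-1} - ((A^{(i)}x_{k-1} - A^{(i)}x_⋆)/||A^{(i)}||^2)(A^{(i)})^T uses the same random row index i as the REK update of x_k. -/

import Mathlib

open Matrix BigOperators Finset

noncomputable def frob2 {m n : ℕ} (A : Matrix (Fin m) (Fin n) ℝ) : ℝ :=
  ∑ i, ∑ j, (A i j) ^ 2

noncomputable def colNorm2 {m n : ℕ} (A : Matrix (Fin m) (Fin n) ℝ) (j : Fin n) : ℝ :=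
  ∑ i, (A i j) ^ 2

noncomputable def rowNorm2 {m n : ℕ} (A : Matrix (Fin m) (Fin n) ℝ) (i : Fin m) : ℝ :=
  ∑ j, (A i j) ^ 2

noncomputable def colStep {m n : ℕ} (A : Matrix (Fin m) (Fin n) ℝ) (j : Fin n)
    (z : Fin m → ℝ) : Fin m → ℝ :=
  z - ((Aᵀ j ⬝ᵥ z) / colNorm2 A j) • Aᵀ j

/-- One REK step: first an RK step on `Aᵀ z = 0` using column `j = p.1`, then an RK
step on `A x = b - z_k` using row `i = p.2` (with the freshly updated `z`). -/
noncomputable def rekStep {m n : ℕ} (A : Matrix (Fin m) (Fin n) ℝ)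
    (b : Fin m → ℝ) (p : Fin n × Fin m) (s : (Fin m → ℝ) × (Fin n → ℝ)) :
    (Fin m → ℝ) × (Fin n → ℝ) :=
  let z' := colStep A p.1 s.1
  (z', s.2 - ((A p.2 ⬝ᵥ s.2 - b p.2 + z' p.2) / rowNorm2 A p.2) • A p.2)

/-- REK iterates: the head of the list is the pair of indices of the most recent step. -/
noncomputable def rekIter {m n : ℕ} (A : Matrix (Fin m) (Fin n) ℝ)
    (b : Fin m → ℝ) (s0 : (Fin m → ℝ) × (Fin n → ℝ)) :
    List (Fin n × Fin m) → (Fin m → ℝ) × (Fin n → ℝ)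
  | [] => s0
  | p :: l => rekStep A b p (rekIter A b s0 l)

/-- Probability of choosing the index pair `p` at a given REK step. -/
noncomputable def rekProb {m n : ℕ} (A : Matrix (Fin m) (Fin n) ℝ)
    (p : Fin n × Fin m) : ℝ :=
  (colNorm2 A p.1 / frob2 A) * (rowNorm2 A p.2 / frob2 A)

/-- Pythagorean decomposition of the REK squared error,
`E[‖x_k - x⋆‖²] = E[‖x_k - x̂_k‖²] + E[‖x̂_k - x⋆‖²]`, where `x̂_k` is the one-step
RK update for `A x = A x⋆` from `x_{k-1}` using the same row index `(ω 0).2` as the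
`k`-th REK step (the head entry of the sample `ω` being the most recent step). -/
lemma pyth_aux {n : ℕ} (a y xs : Fin n → ℝ) (d : ℝ) :
    ((y - d • a) - xs) ⬝ᵥ ((y - d • a) - xs)
      = ((y - d • a) - (y - ((a ⬝ᵥ (y - xs)) / (∑ j, (a j) ^ 2)) • a)) ⬝ᵥ
          ((y - d • a) - (y - ((a ⬝ᵥ (y - xs)) / (∑ j, (a j) ^ 2)) • a))
        + ((y - ((a ⬝ᵥ (y - xs)) / (∑ j, (a j) ^ 2)) • a) - xs) ⬝ᵥ
            ((y - ((a ⬝ᵥ (y - xs)) / (∑ j, (a j) ^ 2)) • a) - xs) := by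
  set S : ℝ := ∑ j, (a j) ^ 2 with hS
  set c : ℝ := (a ⬝ᵥ (y - xs)) / S with hc
  set u : Fin n → ℝ := (y - d • a) - (y - c • a) with hu
  set v : Fin n → ℝ := (y - c • a) - xs with hv
  have haa : a ⬝ᵥ a = S := by
    simp [dotProduct, hS, sq]
  have hsum : (y - d • a) - xs = u + v := by
    rw [hu, hv]; abel
  have hu' : u = (c - d) • a := by
    rw [hu]; ext j; simp [sub_smul]; ring
  have huv : u ⬝ᵥ v = 0 := by
    rcases eq_or_ne S 0 with h0 | h0
    · have ha : a = 0 := by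
        funext j
        have : ∀ j ∈ Finset.univ, (a j) ^ 2 = 0 := by
          intro j _
          exact (Finset.sum_eq_zero_iff_of_nonneg (fun i _ => sq_nonneg _)).1 h0 j (Finset.mem_univ j)
        have := this j (Finset.mem_univ j)
        exact pow_eq_zero_iff (two_ne_zero) |>.1 this
      simp [hu', ha]
    · have hav : a ⬝ᵥ v = 0 := by
        rw [hv, dotProduct_sub, dotProduct_sub, dotProduct_smul, haa, hc]
        field_simp
        rw [smul_eq_mul, div_mul_cancel₀ _ h0, dotProduct_sub]; ring
      rw [hu', smul_dotProduct, hav, smul_zero]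
  rw [hsum, add_dotProduct, dotProduct_add, dotProduct_add, huv,
    dotProduct_comm v u, huv]
  ring

theorem rek_squared_error_decomposition {m n : ℕ}
    (A : Matrix (Fin m) (Fin n) ℝ) (hA : A ≠ 0)
    (b : Fin m → ℝ) (xs : Fin n → ℝ)
    (hls : Aᵀ *ᵥ (b - A *ᵥ xs) = 0) (hxs : ∃ y, xs = Aᵀ *ᵥ y)
    (x0 : Fin n → ℝ) (hx0 : ∃ u, x0 = Aᵀ *ᵥ u)
    (z0 : Fin m → ℝ) (hz0 : ∃ y, z0 = b + A *ᵥ y)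
    (k : ℕ) (hk : 0 < k) :
    ∑ ω : Fin k → Fin n × Fin m,
        (∏ t, rekProb A (ω t)) *
          (((rekIter A b (z0, x0) (List.ofFn ω)).2 - xs) ⬝ᵥ
            ((rekIter A b (z0, x0) (List.ofFn ω)).2 - xs))
      = (∑ ω : Fin k → Fin n × Fin m,
          (∏ t, rekProb A (ω t)) *
            (((rekIter A b (z0, x0) (List.ofFn ω)).2
                - ((rekIter A b (z0, x0) ((List.ofFn ω).tail)).2
                    - ((A (ω ⟨0, hk⟩).2 ⬝ᵥ
                          ((rekIter A b (z0, x0) ((List.ofFn ω).tail)).2 - xs))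
                        / rowNorm2 A (ω ⟨0, hk⟩).2) • A (ω ⟨0, hk⟩).2)) ⬝ᵥ
              ((rekIter A b (z0, x0) (List.ofFn ω)).2
                - ((rekIter A b (z0, x0) ((List.ofFn ω).tail)).2
                    - ((A (ω ⟨0, hk⟩).2 ⬝ᵥ
                          ((rekIter A b (z0, x0) ((List.ofFn ω).tail)).2 - xs))
                        / rowNorm2 A (ω ⟨0, hk⟩).2) • A (ω ⟨0, hk⟩).2))))
        + ∑ ω : Fin k → Fin n × Fin m,
            (∏ t, rekProb A (ω t)) *
              ((((rekIter A b (z0, x0) ((List.ofFn ω).tail)).2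
                    - ((A (ω ⟨0, hk⟩).2 ⬝ᵥ
                          ((rekIter A b (z0, x0) ((List.ofFn ω).tail)).2 - xs))
                        / rowNorm2 A (ω ⟨0, hk⟩).2) • A (ω ⟨0, hk⟩).2) - xs) ⬝ᵥ
                (((rekIter A b (z0, x0) ((List.ofFn ω).tail)).2
                    - ((A (ω ⟨0, hk⟩).2 ⬝ᵥ
                          ((rekIter A b (z0, x0) ((List.ofFn ω).tail)).2 - xs))
                        / rowNorm2 A (ω ⟨0, hk⟩).2) • A (ω ⟨0, hk⟩).2) - xs)) := by
  obtain ⟨k, rfl⟩ : ∃ k', k = k' + 1 := ⟨k - 1, (Nat.succ_pred_eq_of_pos hk).symm⟩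
  rw [← Finset.sum_add_distrib]
  apply Finset.sum_congr rfl
  intro ω _
  rw [← mul_add]
  congr 1
  have htail : (List.ofFn ω).tail = List.ofFn (fun i : Fin k => ω i.succ) := by
    rw [List.ofFn_succ]; rfl
  set y : Fin n → ℝ := (rekIter A b (z0, x0) ((List.ofFn ω).tail)).2 with hy
  set a : Fin n → ℝ := A (ω ⟨0, hk⟩).2 with ha
  have hstep : rekIter A b (z0, x0) (List.ofFn ω)
      = rekStep A b (ω 0) (rekIter A b (z0, x0) ((List.ofFn ω).tail)) := by
    rw [htail, List.ofFn_succ]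
    rfl
  set s : (Fin m → ℝ) × (Fin n → ℝ) := rekIter A b (z0, x0) ((List.ofFn ω).tail) with hs
  have hd : (rekIter A b (z0, x0) (List.ofFn ω)).2
      = y - ((A (ω ⟨0, hk⟩).2 ⬝ᵥ s.2 - b (ω ⟨0, hk⟩).2
          + (colStep A (ω ⟨0, hk⟩).1 s.1) (ω ⟨0, hk⟩).2) / rowNorm2 A (ω ⟨0, hk⟩).2) • a := by
    rw [hstep]
    rfl
  rw [hd]
  have hrow : rowNorm2 A (ω ⟨0, hk⟩).2 = ∑ j, (a j) ^ 2 := rfl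
  rw [hrow]
  exact pyth_aux a y xs _
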